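/- For odd primes p and q (Eisenstein's formula): the Legendre symbol (q/p) equals 4^{((p-1)/2)((q-1)/2)} · ∏_{j=1}^{(p-1)/2} ∏_{k=1}^{(q-1)/2} (cos²(2πj/p) - cos²(2πk/q)). -/

import Mathlib

open Finset Polynomial


lemma prod_root {q : ℕ} (hq : 0 < q) {ζ : ℂ} (hζ : IsPrimitiveRoot ζ q) (z : ℂ) :
    ∏ k ∈ Finset.range q, (z - ζ ^ k) = z ^ q - 1 := by
  have himg : (Finset.range q).image (ζ ^ ·) = nthRootsFinset q (1:ℂ) := by
    apply Finset.eq_of_subset_of_card_le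
    · intro x hx
      simp only [Finset.mem_image, Finset.mem_range] at hx
      obtain ⟨k, hk, rfl⟩ := hx
      rw [Polynomial.mem_nthRootsFinset hq, ← pow_mul, mul_comm, pow_mul, hζ.pow_eq_one, one_pow]
    · rw [hζ.card_nthRootsFinset, Finset.card_image_of_injOn]
      · simp
      · intro i hi j hj hij
        exact hζ.pow_inj (Finset.mem_range.1 hi) (Finset.mem_range.1 hj) hij
  have := congrArg (Polynomial.eval z) (X_pow_sub_one_eq_prod hq hζ)
  simp only [eval_sub, eval_pow, eval_X, eval_one, eval_prod, eval_sub, eval_C] at this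
  rw [this, ← himg, Finset.prod_image]
  intro i hi j hj hij
  exact hζ.pow_inj (Finset.mem_range.1 hi) (Finset.mem_range.1 hj) hij

lemma sin_eq_exp (w : ℂ) :
    Complex.sin w = Complex.exp (-(w*Complex.I)) * (1 - Complex.exp (2*w*Complex.I)) * (Complex.I/2) := by
  have h : Complex.exp (-(w*Complex.I)) * Complex.exp (2*w*Complex.I) = Complex.exp (w*Complex.I) := by
    rw [← Complex.exp_add]; ring_nf
  rw [Complex.sin, mul_sub, mul_one, h]
  ring_nf

lemma prod_sin_complex (q : ℕ) (hq : Odd q) (z : ℂ) :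
    ∏ k ∈ Finset.range q, Complex.sin (z + 2*(Real.pi:ℂ)*k/q)
      = (-1)^((q-1)/2) * Complex.sin (q*z) / 2^(q-1) := by
  have hq0 : 0 < q := hq.pos
  have hqc : (q:ℂ) ≠ 0 := Nat.cast_ne_zero.2 hq0.ne'
  have hqe : Even (q - 1) := Nat.Odd.sub_odd hq odd_one
  obtain ⟨t, ht⟩ := hqe
  have ht2 : q - 1 = 2 * t := by omega
  have htq : (q-1)/2 = t := by omega
  set π : ℂ := (Real.pi : ℂ) with hπ
  -- Gauss sum
  have hs : (∑ k ∈ Finset.range q, (k:ℂ)) = q*((q:ℂ)-1)/2 := by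
    have h2 := Finset.sum_range_id_mul_two q
    have h3 : (((∑ k ∈ Finset.range q, k) * 2 : ℕ) : ℂ) = ((q * (q-1) : ℕ) : ℂ) := by rw [h2]
    push_cast [Nat.cast_sub hq0] at h3
    linear_combination h3/2
  have step1 : ∏ k ∈ Finset.range q, Complex.sin (z + 2*π*k/q)
      = (∏ k ∈ Finset.range q, Complex.exp (-((z + 2*π*k/q)*Complex.I))) *
        (∏ k ∈ Finset.range q, (1 - Complex.exp (2*(z + 2*π*k/q)*Complex.I))) * (Complex.I/2)^q := by
    have hsin' : ∀ k:ℕ, Complex.sin (z + 2*π*(k:ℂ)/q) =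
        Complex.exp (-((z + 2*π*(k:ℂ)/q)*Complex.I)) *
          (1 - Complex.exp (2*(z + 2*π*(k:ℂ)/q)*Complex.I)) * (Complex.I/2) :=
      fun k => sin_eq_exp _
    rw [Finset.prod_congr rfl (fun k _ => hsin' k), Finset.prod_mul_distrib,
      Finset.prod_mul_distrib, Finset.prod_const, Finset.card_range]
  -- part A
  have hA : (∏ k ∈ Finset.range q, Complex.exp (-((z + 2*π*k/q)*Complex.I)))
      = Complex.exp (-((q:ℂ)*z*Complex.I)) := by
    rw [← Complex.exp_sum]
    have expand : ∀ k:ℕ, -((z + 2*π*(k:ℂ)/q)*Complex.I)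
        = -(z*Complex.I) + (-(2*π*Complex.I/q)) * k := by intro k; ring
    rw [Finset.sum_congr rfl (fun k _ => expand k), Finset.sum_add_distrib, Finset.sum_const,
      Finset.card_range, ← Finset.mul_sum, hs]
    have harg : q • (-(z * Complex.I)) + -(2 * π * Complex.I / ↑q) * (↑q * ((q:ℂ) - 1) / 2)
        = -((q:ℂ)*z*Complex.I) + ((q-1:ℕ):ℂ) * (-(π*Complex.I)) := by
      push_cast [Nat.cast_sub hq0]
      rw [nsmul_eq_mul]
      field_simp
    rw [harg, Complex.exp_add, Complex.exp_nat_mul]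
    have hexpI : Complex.exp (-(π*Complex.I)) = -1 := by
      rw [Complex.exp_neg, hπ, Complex.exp_pi_mul_I]; norm_num
    rw [hexpI, ht2]
    simp [pow_mul]
  -- part B
  have hζ : IsPrimitiveRoot (Complex.exp (2*π*Complex.I/q)) q :=
    Complex.isPrimitiveRoot_exp q hq0.ne'
  set ζ : ℂ := Complex.exp (2*π*Complex.I/q) with hζdef
  have hζ2 : IsPrimitiveRoot (ζ^2) q := hζ.pow_of_coprime 2 hq.coprime_two_left
  set Z : ℂ := Complex.exp (2*z*Complex.I) with hZdef
  have hZ0 : Z ≠ 0 := Complex.exp_ne_zero _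
  have hB : (∏ k ∈ Finset.range q, (1 - Complex.exp (2*(z + 2*π*k/q)*Complex.I)))
      = 1 - Complex.exp (2*((q:ℂ)*z)*Complex.I) := by
    have hfac : ∀ k:ℕ, (1 - Complex.exp (2*(z + 2*π*(k:ℂ)/q)*Complex.I)) = Z * (Z⁻¹ - (ζ^2)^k) := by
      intro k
      have h1 : Complex.exp (2*(z + 2*π*(k:ℂ)/q)*Complex.I) = Z * (ζ^2)^k := by
        rw [← pow_mul, hζdef, ← Complex.exp_nat_mul, hZdef, ← Complex.exp_add]
        congr 1
        push_cast
        field_simp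
      rw [h1]
      field_simp
    rw [Finset.prod_congr rfl (fun k _ => hfac k), Finset.prod_mul_distrib, Finset.prod_const,
      Finset.card_range, prod_root hq0 hζ2]
    have hZq : Z^q = Complex.exp (2*((q:ℂ)*z)*Complex.I) := by
      rw [hZdef, ← Complex.exp_nat_mul]; congr 1; ring
    rw [mul_sub, ← mul_pow, mul_inv_cancel₀ hZ0, one_pow, hZq]
    ring
  -- assemble
  rw [step1, hA, hB]
  have hsin : Complex.sin ((q:ℂ)*z) = Complex.exp (-((q:ℂ)*z*Complex.I)) *
      (1 - Complex.exp (2*((q:ℂ)*z)*Complex.I)) * (Complex.I/2) := sin_eq_exp _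
  have hpow : (Complex.I/2)^q = (Complex.I/2) * (Complex.I/2)^(q-1) := by
    conv_lhs => rw [show q = 1 + (q-1) by omega, pow_add, pow_one]
  have hpow2 : (Complex.I/2:ℂ)^(q-1) = (-1)^((q-1)/2) / 2^(q-1) := by
    rw [htq, ht2, pow_mul, pow_mul, div_pow]
    norm_num [Complex.I_sq]
    rw [show (-(1/4):ℂ) = (-1)/4 by norm_num, div_pow]
  rw [hpow, hpow2, hsin]
  ring

lemma sin_pair (θ a : ℝ) : Real.sin (θ + a) * Real.sin (θ - a) = Real.sin θ ^ 2 - Real.sin a ^ 2 := by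
  rw [Real.sin_add, Real.sin_sub]
  have h1 := Real.sin_sq_add_cos_sq θ
  have h2 := Real.sin_sq_add_cos_sq a
  nlinarith [h1, h2]

lemma sin_nat_mul (q : ℕ) (hq : Odd q) (θ : ℝ) :
    Real.sin (q * θ) = (-4:ℝ) ^ ((q-1)/2) * Real.sin θ *
      ∏ k ∈ Finset.Icc 1 ((q-1)/2), (Real.sin θ ^ 2 - Real.sin (2*Real.pi*k/q) ^ 2) := by
  have hq0 : 0 < q := hq.pos
  have hqr : (q:ℝ) ≠ 0 := Nat.cast_ne_zero.2 hq0.ne'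
  have hq' := hq
  obtain ⟨n, hn⟩ : ∃ n, q = 2*n + 1 := hq'
  have htq : (q-1)/2 = n := by omega
  -- real base identity
  have base : ∏ k ∈ Finset.range q, Real.sin (θ + 2*Real.pi*k/q)
      = (-1)^((q-1)/2) * Real.sin (q*θ) / 2^(q-1) := by
    exact_mod_cast prod_sin_complex q hq (θ:ℂ)
  -- split off k = 0
  have h0 : Finset.range q = insert 0 (Finset.Icc 1 (q-1)) := by
    ext x; simp only [Finset.mem_range, Finset.mem_insert, Finset.mem_Icc]; omega
  rw [h0, Finset.prod_insert (by simp)] at base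
  simp only [Nat.cast_zero, mul_zero, zero_div, add_zero] at base
  -- split Icc 1 (q-1)
  have hsplit : Finset.Icc 1 (q-1) = Finset.Icc 1 n ∪ Finset.Icc (n+1) (q-1) := by
    ext x; simp only [Finset.mem_Icc, Finset.mem_union]; omega
  have hdisj : Disjoint (Finset.Icc 1 n) (Finset.Icc (n+1) (q-1)) := by
    rw [Finset.disjoint_left]; intro x; simp only [Finset.mem_Icc]; omega
  rw [hsplit, Finset.prod_union hdisj] at base
  -- reindex second half
  have hre : ∏ k ∈ Finset.Icc (n+1) (q-1), Real.sin (θ + 2*Real.pi*k/q)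
      = ∏ k ∈ Finset.Icc 1 n, Real.sin (θ + 2*Real.pi*((q - k : ℕ))/q) := by
    refine Finset.prod_nbij' (fun k => q - k) (fun k => q - k) ?_ ?_ ?_ ?_ ?_
    · intro a ha; simp only [Finset.mem_Icc] at ha ⊢; omega
    · intro a ha; simp only [Finset.mem_Icc] at ha ⊢; omega
    · intro a ha; simp only [Finset.mem_Icc] at ha ⊢; omega
    · intro a ha; simp only [Finset.mem_Icc] at ha ⊢; omega
    · intro a ha; simp only [Finset.mem_Icc] at ha
      rw [show q - (q - a) = a from by omega]
  rw [hre, ← Finset.prod_mul_distrib] at base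
  -- pair identity
  have hpair : ∀ k ∈ Finset.Icc 1 n,
      Real.sin (θ + 2*Real.pi*k/q) * Real.sin (θ + 2*Real.pi*((q - k : ℕ))/q)
        = Real.sin θ ^ 2 - Real.sin (2*Real.pi*k/q) ^ 2 := by
    intro k hk
    simp only [Finset.mem_Icc] at hk
    have hkq : (k:ℝ) ≤ q := by exact_mod_cast Nat.le_of_lt (by omega)
    have hcast : ((q - k : ℕ) : ℝ) = (q:ℝ) - k := by
      rw [Nat.cast_sub (by omega)]
    rw [hcast, show θ + 2*Real.pi*((q:ℝ)-k)/q = (θ - 2*Real.pi*k/q) + 2*Real.pi by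
      field_simp; ring, Real.sin_add_two_pi, sin_pair]
  rw [Finset.prod_congr rfl hpair] at base
  -- solve
  have h5 : ((-1:ℝ))^n * (-1)^n = 1 := by
    rw [← pow_add]; exact Even.neg_one_pow ⟨n, rfl⟩
  have h6 : (2:ℝ)^(q-1) ≠ 0 := by positivity
  have h4 : ((-4:ℝ))^((q-1)/2) = (-1)^n * 2^(q-1) := by
    rw [htq, show ((-4:ℝ)) = (-1) * 2^2 by norm_num, mul_pow, ← pow_mul]
    congr 2
    omega
  rw [h4, htq] at *
  field_simp at base
  linear_combination (-((-1:ℝ)^n)) * base - Real.sin ((q:ℝ)*θ) * h5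

theorem stmt9 (p q : ℕ) [Fact p.Prime] [Fact q.Prime] (hp : Odd p) (hq : Odd q)
    (hpq : p ≠ q) :
    (legendreSym p q : ℝ) =
      4 ^ (((p - 1) / 2) * ((q - 1) / 2)) *
        ∏ j ∈ Finset.Icc 1 ((p - 1) / 2), ∏ k ∈ Finset.Icc 1 ((q - 1) / 2),
          (Real.cos (2 * Real.pi * j / p) ^ 2 - Real.cos (2 * Real.pi * k / q) ^ 2) := by
  have hpp : p.Prime := Fact.out
  have hqp : q.Prime := Fact.out
  have hpodd : p % 2 = 1 := Nat.odd_iff.1 hp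
  have hqodd : q % 2 = 1 := Nat.odd_iff.1 hq
  have hp2 : p ≠ 2 := by omega
  have hp0 : 0 < p := hpp.pos
  have hple : 2 ≤ p := hpp.two_le
  set m := (p-1)/2 with hm
  set n := (q-1)/2 with hn
  have hm2 : p / 2 = m := by omega
  have hm1 : 1 ≤ m := by omega
  have hmp : 2*m + 1 = p := by omega
  have hq0 : ((q:ℤ) : ZMod p) ≠ 0 := by
    rw [Int.cast_natCast, Ne, ZMod.natCast_eq_zero_iff]
    intro hdvd
    exact hpq ((Nat.prime_dvd_prime_iff_eq hpp hqp).1 hdvd)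
  have hqz : ((q:ℕ) : ZMod p) ≠ 0 := by
    intro h; apply hq0; rw [Int.cast_natCast, h]
  -- residues
  set r : ℕ → ℕ := fun j => ((q * j : ℕ) : ZMod p).val with hr
  have hrlt : ∀ j, r j < p := fun j => ZMod.val_lt _
  have hrne : ∀ j ∈ Finset.Icc 1 m, r j ≠ 0 := by
    intro j hj
    simp only [Finset.mem_Icc] at hj
    simp only [hr, Ne, ZMod.val_eq_zero, Nat.cast_mul]
    intro h
    rcases mul_eq_zero.1 h with h' | h'
    · exact hqz h'
    · rw [ZMod.natCast_eq_zero_iff] at h'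
      have := Nat.le_of_dvd (by omega) h'
      omega
  -- fold map
  set σ : ℕ → ℕ := fun j => if m < r j then p - r j else r j with hσ
  have hσmem : ∀ j ∈ Finset.Icc 1 m, σ j ∈ Finset.Icc 1 m := by
    intro j hj
    have h1 := hrlt j
    have h2 := hrne j hj
    simp only [hσ, Finset.mem_Icc]
    split <;> omega
  -- sin of residues
  have hsin_r : ∀ j : ℕ, Real.sin (2*Real.pi*((q*j : ℕ) : ℝ)/p) = Real.sin (2*Real.pi*(r j)/p) := by
    intro j
    have hmod : q * j = p * (q*j/p) + r j := by
      rw [hr]; simp only [ZMod.val_natCast]; exact (Nat.div_add_mod (q*j) p).symm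
    have hpr : (p:ℝ) ≠ 0 := Nat.cast_ne_zero.2 hp0.ne'
    have harg : ((q*j : ℕ) : ℝ) = (r j : ℝ) + ((q*j/p : ℕ) : ℝ) * p := by
      rw [show ((q*j : ℕ) : ℝ) = ((p * (q*j/p) + r j : ℕ) : ℝ) from by rw [← hmod]]
      push_cast; ring
    rw [show (2*Real.pi*((q*j : ℕ) : ℝ)/p) = 2*Real.pi*(r j)/p + ((q*j/p : ℕ) : ℝ) * (2*Real.pi) by
      rw [harg]; field_simp]
    exact Real.sin_add_nat_mul_two_pi _ _
  have hsin_fold : ∀ j ∈ Finset.Icc 1 m, Real.sin (2*Real.pi*(r j)/p)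
      = (if m < r j then (-1:ℝ) else 1) * Real.sin (2*Real.pi*(σ j)/p) := by
    intro j hj
    simp only [hσ]
    split
    · have h1 := hrlt j
      have hc : ((p - r j : ℕ) : ℝ) = (p:ℝ) - r j := by
        rw [Nat.cast_sub (le_of_lt h1)]
      rw [hc, show 2*Real.pi*((p:ℝ) - r j)/p = 2*Real.pi - 2*Real.pi*(r j)/p by
        field_simp, Real.sin_two_pi_sub]
      ring
    · ring
  -- injectivity of σ on Icc 1 m
  have hnatinj : ∀ a b : ℕ, a < p → b < p → (a : ZMod p) = (b : ZMod p) → a = b := by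
    intro a b ha hb h
    have := congrArg ZMod.val h
    rwa [ZMod.val_cast_of_lt ha, ZMod.val_cast_of_lt hb] at this
  have hjz : ∀ j ∈ Finset.Icc 1 m, ((j:ℕ) : ZMod p) ≠ 0 := by
    intro j hj
    simp only [Finset.mem_Icc] at hj
    rw [Ne, ZMod.natCast_eq_zero_iff]
    intro h'
    have := Nat.le_of_dvd (by omega) h'
    omega
  have hσinj : ∀ j₁ ∈ Finset.Icc 1 m, ∀ j₂ ∈ Finset.Icc 1 m, σ j₁ = σ j₂ → j₁ = j₂ := by
    intro j₁ hj₁ j₂ hj₂ hss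
    have hrv : ∀ j, ((r j : ℕ) : ZMod p) = (q : ZMod p) * (j : ZMod p) := by
      intro j; rw [hr]; simp [ZMod.natCast_val, Nat.cast_mul]
    have hmem₁ := Finset.mem_Icc.1 hj₁
    have hmem₂ := Finset.mem_Icc.1 hj₂
    have hcase : r j₁ = r j₂ ∨ r j₁ + r j₂ = p := by
      simp only [hσ] at hss
      have := hrlt j₁; have := hrlt j₂
      have := hrne j₁ hj₁; have := hrne j₂ hj₂
      split at hss <;> split at hss <;> omega
    rcases hcase with hcc | hcc
    · have : (q : ZMod p) * (j₁ : ZMod p) = (q : ZMod p) * (j₂ : ZMod p) := by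
        rw [← hrv, ← hrv, hcc]
      have hj12 := mul_left_cancel₀ hqz this
      exact hnatinj j₁ j₂ (by omega) (by omega) hj12
    · exfalso
      have : ((r j₁ + r j₂ : ℕ) : ZMod p) = 0 := by rw [hcc]; exact ZMod.natCast_self p
      rw [Nat.cast_add, hrv, hrv, ← mul_add] at this
      rcases mul_eq_zero.1 this with h' | h'
      · exact hqz h'
      · rw [← Nat.cast_add, ZMod.natCast_eq_zero_iff] at h'
        have := Nat.le_of_dvd (by omega) h'
        omega
  -- reindex product over σ
  have hσprod : ∏ j ∈ Finset.Icc 1 m, Real.sin (2*Real.pi*(σ j)/p)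
      = ∏ j ∈ Finset.Icc 1 m, Real.sin (2*Real.pi*j/p) := by
    refine Finset.prod_nbij σ hσmem ?_ ?_ (fun a ha => rfl)
    · intro a ha b hb hab
      exact hσinj a (Finset.mem_coe.1 ha) b (Finset.mem_coe.1 hb) hab
    · intro b hb
      obtain ⟨a, ha, hba⟩ := Finset.surj_on_of_inj_on_of_card_le (fun a _ => σ a)
        (fun a ha => hσmem a ha) (fun a₁ a₂ h₁ h₂ h => hσinj a₁ h₁ a₂ h₂ h) le_rfl b
        (Finset.mem_coe.1 hb)
      exact ⟨a, ha, hba.symm⟩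
  -- Gauss lemma
  have hgauss := ZMod.gauss_lemma hp2 hq0
  -- the sign product
  have hsign : ∏ j ∈ Finset.Icc 1 m, (if m < r j then (-1:ℝ) else 1)
      = (legendreSym p q : ℝ) := by
    rw [Finset.prod_ite, Finset.prod_const, Finset.prod_const, one_pow, mul_one, hgauss]
    have hset : Finset.filter (fun x : ℕ => p / 2 < (((q:ℕ):ℤ) * (x:ℕ) : ZMod p).val)
          (Finset.Ico 1 (p / 2).succ)
        = Finset.filter (fun x : ℕ => m < r x) (Finset.Icc 1 m) := by
      rw [show Finset.Ico 1 (p / 2).succ = Finset.Icc 1 m from by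
        ext x; simp only [Finset.mem_Icc, Finset.mem_Ico]; omega]
      apply Finset.filter_congr
      intro x hx
      have hx2 : (((q:ℕ):ℤ) * (x:ℕ) : ZMod p) = ((q * x : ℕ) : ZMod p) := by push_cast; ring
      rw [hx2, hm2]
    rw [hset]
    push_cast
    ring
  -- main Gauss step
  have hstep : ∏ j ∈ Finset.Icc 1 m, Real.sin (2*Real.pi*((q*j : ℕ) : ℝ)/p)
      = (legendreSym p q : ℝ) * ∏ j ∈ Finset.Icc 1 m, Real.sin (2*Real.pi*j/p) := by
    rw [Finset.prod_congr rfl (fun j hj => by rw [hsin_r j, hsin_fold j hj]),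
      Finset.prod_mul_distrib, hsign, hσprod]
  -- positivity of base product
  have hpr : (p:ℝ) ≠ 0 := Nat.cast_ne_zero.2 hp0.ne'
  have hS : (0:ℝ) < ∏ j ∈ Finset.Icc 1 m, Real.sin (2*Real.pi*j/p) := by
    apply Finset.prod_pos
    intro j hj
    simp only [Finset.mem_Icc] at hj
    have hj0 : (0:ℝ) < j := by exact_mod_cast (by omega : 0 < j)
    have hp0' : (0:ℝ) < p := by exact_mod_cast hp0
    apply Real.sin_pos_of_pos_of_lt_pi
    · apply div_pos _ hp0'
      nlinarith [Real.pi_pos]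
    · have hjm : (j:ℝ) ≤ m := by exact_mod_cast hj.2
      have hmr : 2*(m:ℝ) < p := by exact_mod_cast (by omega : 2*m < p)
      rw [div_lt_iff₀ hp0']
      nlinarith [Real.pi_pos]
  have hSne := ne_of_gt hS
  -- expand with sin_nat_mul
  have harg2 : ∀ j:ℕ, 2*Real.pi*((q*j:ℕ):ℝ)/p = (q:ℝ) * (2*Real.pi*j/p) := by
    intro j; push_cast; ring
  have hmul : ∏ j ∈ Finset.Icc 1 m, Real.sin (2*Real.pi*((q*j:ℕ):ℝ)/p)
      = ((-4:ℝ)^((q-1)/2))^m * (∏ j ∈ Finset.Icc 1 m, Real.sin (2*Real.pi*j/p)) *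
        ∏ j ∈ Finset.Icc 1 m, ∏ k ∈ Finset.Icc 1 ((q-1)/2),
          (Real.sin (2*Real.pi*j/p)^2 - Real.sin (2*Real.pi*k/q)^2) := by
    rw [Finset.prod_congr rfl (fun j _ => by
      rw [harg2 j, sin_nat_mul q hq (2*Real.pi*j/p)])]
    rw [Finset.prod_mul_distrib, Finset.prod_mul_distrib, Finset.prod_const, Nat.card_Icc,
      Nat.add_sub_cancel]
  have hL : (legendreSym p q : ℝ) = ((-4:ℝ)^((q-1)/2))^m *
      ∏ j ∈ Finset.Icc 1 m, ∏ k ∈ Finset.Icc 1 ((q-1)/2),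
        (Real.sin (2*Real.pi*j/p)^2 - Real.sin (2*Real.pi*k/q)^2) := by
    apply mul_right_cancel₀ hSne
    rw [← hstep, hmul]
    ring
  -- convert sin² to cos²
  have hinner : ∀ j:ℕ, ∏ k ∈ Finset.Icc 1 ((q-1)/2),
      (Real.sin (2*Real.pi*j/p)^2 - Real.sin (2*Real.pi*k/q)^2)
      = (-1:ℝ)^((q-1)/2) * ∏ k ∈ Finset.Icc 1 ((q-1)/2),
        (Real.cos (2*Real.pi*j/p)^2 - Real.cos (2*Real.pi*k/q)^2) := by
    intro j
    have hterm : ∀ k : ℕ,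
        Real.sin (2*Real.pi*(j:ℝ)/p)^2 - Real.sin (2*Real.pi*(k:ℝ)/q)^2
        = (-1) * (Real.cos (2*Real.pi*(j:ℝ)/p)^2 - Real.cos (2*Real.pi*(k:ℝ)/q)^2) := by
      intro k; rw [Real.sin_sq, Real.sin_sq]; ring
    rw [Finset.prod_congr rfl (fun k _ => hterm k)]
    rw [Finset.prod_mul_distrib, Finset.prod_const, Nat.card_Icc, Nat.add_sub_cancel]
  rw [Finset.prod_congr rfl (fun j _ => hinner j), Finset.prod_mul_distrib,
    Finset.prod_const, Nat.card_Icc, Nat.add_sub_cancel] at hL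
  have hfin : ((-4:ℝ)^((q-1)/2))^m * ((-1:ℝ)^((q-1)/2))^m = 4^(m*((q-1)/2)) := by
    rw [← mul_pow, ← mul_pow]
    norm_num
    rw [← pow_mul, Nat.mul_comm]
  rw [hL, ← mul_assoc, hfin]
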